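/- In a Grothendieck topos, let q : X ⟶ Q be an epimorphism and let R be the subobject of X ⨯ X obtained by pulling back the diagonal subobject of Q ⨯ Q along the morphism q ⨯ q : X ⨯ X ⟶ Q ⨯ Q (the kernel-pair subobject of q). Then Q is decidable if and only if R is a complemented subobject of X ⨯ X. -/

import Mathlib

/-!
Formalisation of a statement from "On the profinite fundamental group of a
connected Grothendieck topos" (Berger–Iwaniack).  A Grothendieck topos is
modelled as `Sheaf J (Type u)` for a small site `(C, J)`.
-/

open CategoryTheory CategoryTheory.Limits

universe u

instance instHasColimitsSheafTypeAux {C : Type u} [SmallCategory C] {J : GrothendieckTopology C} :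
    HasColimits (Sheaf J (Type u)) :=
  @Sheaf.instHasColimitsOfSize C _ J (Type u) _ (instHasSheafifyType J).isRightAdjoint Types.hasColimitsOfSize.{u, u}

/-- A subobject `s` of `X` is complemented if it has a complement in the
subobject lattice of `X`. -/
def IsComplementedSub {C : Type u} [SmallCategory C] {J : GrothendieckTopology C}
    {X : Sheaf J (Type u)} (s : Subobject X) : Prop :=
  ∃ t : Subobject X, s ⊓ t = ⊥ ∧ s ⊔ t = ⊤

/-- An object is decidable if its diagonal, regarded as a subobject of `X ⨯ X`,
is complemented. -/
def IsDecidableObj {C : Type u} [SmallCategory C] {J : GrothendieckTopology C}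
    (X : Sheaf J (Type u)) : Prop :=
  IsComplementedSub (Subobject.mk (diag X))

/-- An object is connected if it is not initial and its only complemented
subobjects are `⊥` and `⊤`. -/
def IsConnectedObj {C : Type u} [SmallCategory C] {J : GrothendieckTopology C}
    (X : Sheaf J (Type u)) : Prop :=
  (¬ Nonempty (IsInitial X)) ∧
    ∀ s : Subobject X, IsComplementedSub s → s = ⊥ ∨ s = ⊤

/-- An object is locally connected if it is (isomorphic to) a coproduct of
connected objects. -/
def IsLocallyConnectedObj {C : Type u} [SmallCategory C] {J : GrothendieckTopology C}
    (X : Sheaf J (Type u)) : Prop :=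
  ∃ (I : Type u) (Z : I → Sheaf J (Type u)),
    (∀ i, IsConnectedObj (Z i)) ∧ Nonempty (X ≅ ∐ Z)

/-- An object is locally constant if it is trivialised, with constant fibres,
by some cover of the terminal object. -/
def IsLocallyConstantObj {C : Type u} [SmallCategory C] {J : GrothendieckTopology C}
    (X : Sheaf J (Type u)) : Prop :=
  ∃ (I : Type u) (U : I → Sheaf J (Type u)),
    Epi (terminal.from (∐ U)) ∧
    ∀ i, ∃ (S : Type u)
      (e : X ⨯ U i ≅ (constantSheaf J (Type u)).obj S ⨯ U i),
      e.hom ≫ Limits.prod.snd = Limits.prod.snd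

/-- An object is locally finite if it is trivialised, with finite constant
fibres, by some cover of the terminal object. -/
def IsLocallyFiniteObj {C : Type u} [SmallCategory C] {J : GrothendieckTopology C}
    (X : Sheaf J (Type u)) : Prop :=
  ∃ (I : Type u) (U : I → Sheaf J (Type u)),
    Epi (terminal.from (∐ U)) ∧
    ∀ i, ∃ (n : ℕ)
      (e : X ⨯ U i ≅ (constantSheaf J (Type u)).obj (ULift.{u} (Fin n)) ⨯ U i),
      e.hom ≫ Limits.prod.snd = Limits.prod.snd

/-- An object is finite if it is locally finite and a finite coproduct of
connected objects. -/
def IsFiniteObj {C : Type u} [SmallCategory C] {J : GrothendieckTopology C}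
    (X : Sheaf J (Type u)) : Prop :=
  IsLocallyFiniteObj X ∧
    ∃ (n : ℕ) (Z : Fin n → Sheaf J (Type u)),
      (∀ k, IsConnectedObj (Z k)) ∧ Nonempty (X ≅ ∐ Z)

/-- An object is a sum of finite objects if it is isomorphic to a coproduct of
finite objects. -/
def IsSumOfFiniteObj {C : Type u} [SmallCategory C] {J : GrothendieckTopology C}
    (X : Sheaf J (Type u)) : Prop :=
  ∃ (I : Type u) (Z : I → Sheaf J (Type u)),
    (∀ i, IsFiniteObj (Z i)) ∧ Nonempty (X ≅ ∐ Z)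

/-- A Galois object: a connected, globally supported object `A` such that the
canonical morphism `∐_{g ∈ Aut A} A ⟶ A ⨯ A` is an isomorphism. -/
def IsGaloisObj {C : Type u} [SmallCategory C] {J : GrothendieckTopology C}
    (A : Sheaf J (Type u)) : Prop :=
  IsConnectedObj A ∧ Epi (terminal.from A) ∧
    IsIso (Limits.Sigma.desc (f := fun _ : Aut A => A)
      (fun g => Limits.prod.lift (𝟙 A) g.hom))


/-! ### Auxiliary lemmas -/

namespace BIKAux

open CategoryTheory CategoryTheory.Limits Opposite

universe v₂ u₂ w

section Generic

variable {D : Type u₂} [Category.{v₂} D]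

theorem typePb {P A B Z : Type w} {fst : P ⟶ A} {snd : P ⟶ B} {f : A ⟶ Z} {g : B ⟶ Z}
    (sq : IsPullback fst snd f g) (a : A) (b : B) (h : f a = g b) :
    ∃ p : P, fst p = a ∧ snd p = b := by
  let c : PullbackCone f g := PullbackCone.mk (W := PUnit.{w+1})
    (TypeCat.ofHom fun _ => a) (TypeCat.ofHom fun _ => b) (by ext; exact h)
  refine ⟨sq.isLimit.lift c PUnit.unit, ?_, ?_⟩
  · exact ConcreteCategory.congr_hom (sq.isLimit.fac c WalkingCospan.left) PUnit.unit
  · exact ConcreteCategory.congr_hom (sq.isLimit.fac c WalkingCospan.right) PUnit.unit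

theorem pb_coprod_isColimit [FinitaryExtensive D] [HasPullbacks D] {S T P : D} (v : P ⟶ S ⨿ T) :
    Nonempty (IsColimit (BinaryCofan.mk
      (pullback.snd (coprod.inl : S ⟶ S ⨿ T) v) (pullback.snd (coprod.inr : T ⟶ S ⨿ T) v))) := by
  have vk := FinitaryExtensive.vanKampen (BinaryCofan.mk (coprod.inl : S ⟶ S ⨿ T) coprod.inr)
    (coprodIsCoprod S T)
  refine (vk (BinaryCofan.mk (pullback.snd (coprod.inl : S ⟶ S ⨿ T) v)
      (pullback.snd (coprod.inr : T ⟶ S ⨿ T) v))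
      (mapPair (pullback.fst (coprod.inl : S ⟶ S ⨿ T) v) (pullback.fst coprod.inr v)) v ?_
      (NatTrans.Equifibered.of_discrete _)).mpr ?_
  · ext ⟨⟨⟩⟩ <;> simp [mapPair] <;> exact pullback.condition
  · rintro ⟨⟨⟩⟩
    · exact (IsPullback.of_hasPullback (coprod.inl : S ⟶ S ⨿ T) v).flip
    · exact (IsPullback.of_hasPullback (coprod.inr : T ⟶ S ⨿ T) v).flip

theorem isPullback_prod_map_fst [HasBinaryProducts D] {A B Z : D} (g : A ⟶ B) :
    IsPullback (prod.map g (𝟙 Z)) (prod.fst) (prod.fst) g := by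
  refine IsPullback.of_isLimit' ⟨by simp⟩ ?_
  refine PullbackCone.IsLimit.mk _ (fun s => prod.lift (s.snd) (s.fst ≫ prod.snd)) ?_ ?_ ?_
  · intro s
    apply Limits.prod.hom_ext <;> simp [s.condition, Limits.prod.lift_fst, Limits.prod.lift_snd]
  · intro s; exact Limits.prod.lift_fst _ _
  · intro s m h1 h2
    apply Limits.prod.hom_ext
    · simpa [Limits.prod.lift_fst] using h2
    · have := h1 =≫ prod.snd
      simpa [Limits.prod.lift_snd] using this

theorem isPullback_prod_map_snd [HasBinaryProducts D] {A B Z : D} (g : A ⟶ B) :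
    IsPullback (prod.map (𝟙 Z) g) (prod.snd) (prod.snd) g := by
  refine IsPullback.of_isLimit' ⟨by simp⟩ ?_
  refine PullbackCone.IsLimit.mk _ (fun s => prod.lift (s.fst ≫ prod.fst) (s.snd)) ?_ ?_ ?_
  · intro s
    apply Limits.prod.hom_ext <;> simp [s.condition, Limits.prod.lift_fst, Limits.prod.lift_snd]
  · intro s; exact Limits.prod.lift_snd _ _
  · intro s m h1 h2
    apply Limits.prod.hom_ext
    · have := h1 =≫ prod.fst
      simpa [Limits.prod.lift_fst] using this
    · simpa [Limits.prod.lift_snd] using h2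

section Sub

variable [HasPullbacks D]

theorem factors_pullback_iff {X Y A : D} (f : X ⟶ Y) (p : Subobject Y) (g : A ⟶ X) :
    ((Subobject.pullback f).obj p).Factors g ↔ p.Factors (g ≫ f) := by
  rw [← Subobject.mk_arrow p]
  show (Subobject.mk (pullback.snd p.arrow f)).Factors g ↔ _
  rw [Subobject.mk_factors_iff, Subobject.mk_factors_iff]
  show (∃ k, k ≫ pullback.snd p.arrow f = g) ↔ ∃ k, k ≫ p.arrow = g ≫ f
  constructor
  · rintro ⟨k, hk⟩
    refine ⟨k ≫ pullback.fst _ _, ?_⟩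
    rw [Category.assoc, pullback.condition, ← Category.assoc, hk]
  · rintro ⟨k, hk⟩
    exact ⟨pullback.lift k g hk, Limits.pullback.lift_snd _ _ _⟩

theorem le_of_factors {A : D} {P Q : Subobject A} (h : Q.Factors P.arrow) : P ≤ Q :=
  Subobject.le_of_comm (Q.factorThru _ h) (Subobject.factorThru_arrow _ _ _)

theorem pullback_mono {X Y : D} (f : X ⟶ Y) {a b : Subobject Y} (h : a ≤ b) :
    (Subobject.pullback f).obj a ≤ (Subobject.pullback f).obj b := by
  apply le_of_factors
  rw [factors_pullback_iff]
  exact Subobject.factors_of_le _ h ((factors_pullback_iff f a _).mp (Subobject.factors_self _))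

theorem eq_top_of_factors_epi [Balanced D] {Y : D} {b : Subobject Y} {A : D} (g : A ⟶ Y) [Epi g]
    (h : b.Factors g) : b = ⊤ := by
  haveI : Epi b.arrow := epi_of_epi_fac (Subobject.factorThru_arrow b g h)
  haveI : IsIso b.arrow := isIso_of_mono_of_epi _
  exact Subobject.eq_top_of_isIso_arrow b

theorem pullback_bot [HasInitial D] [InitialMonoClass D] [HasStrictInitialObjects D]
    {X Y : D} (f : X ⟶ Y) : (Subobject.pullback f).obj (⊥ : Subobject Y) = ⊥ := by
  refine le_antisymm ?_ bot_le
  set B := (Subobject.pullback f).obj (⊥ : Subobject Y) with hB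
  have hf : (⊥ : Subobject Y).Factors (B.arrow ≫ f) :=
    (factors_pullback_iff f _ _).mp (Subobject.factors_self B)
  set k := (⊥ : Subobject Y).factorThru _ hf ≫ (Subobject.botCoeIsoInitial (B := Y)).hom with hk
  haveI : IsIso k := initialIsInitial.isIso_to k
  rw [Subobject.bot_eq_initial_to]
  refine Subobject.le_mk_of_comm k ?_
  have h2 : initial.to X = inv k ≫ B.arrow := initial.hom_ext _ _
  rw [h2, IsIso.hom_inv_id_assoc]

end Sub

section Img

variable [HasImages D]

theorem image_le {A B : D} {g : A ⟶ B} {Q : Subobject B} (h : Q.Factors g) :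
    Subobject.mk (image.ι g) ≤ Q :=
  Subobject.mk_le_of_comm
    (image.lift ⟨(Q : D), Q.arrow, Q.factorThru g h, Subobject.factorThru_arrow _ _ _⟩)
    (image.lift_fac _)

theorem le_of_epi_factors [Balanced D] {A : D} {W Q : Subobject A} {E : D}
    (e : E ⟶ (W : D)) [Epi e] (h : Q.Factors (e ≫ W.arrow)) : W ≤ Q := by
  refine le_trans ?_ (image_le h)
  let l : image (e ≫ W.arrow) ⟶ (W : D) :=
    image.lift ⟨(W : D), W.arrow, e, rfl⟩
  have hl : l ≫ W.arrow = image.ι (e ≫ W.arrow) := image.lift_fac _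
  have hfl : factorThruImage (e ≫ W.arrow) ≫ l = e := by
    rw [← cancel_mono W.arrow, Category.assoc, hl, image.fac]
  haveI : Epi l := epi_of_epi_fac hfl
  haveI : Mono l := mono_of_mono_fac hl
  haveI : IsIso l := isIso_of_mono_of_epi l
  exact Subobject.le_mk_of_comm (inv l) (by rw [← hl, IsIso.inv_hom_id_assoc])

/-- The image of a subobject under a morphism. -/
noncomputable def imgSub {X Y : D} (f : X ⟶ Y) (t : Subobject X) : Subobject Y :=
  Subobject.mk (image.ι (t.arrow ≫ f))

theorem imgSub_factors {X Y A : D} (f : X ⟶ Y) (t : Subobject X) {g : A ⟶ X}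
    (h : t.Factors g) : (imgSub f t).Factors (g ≫ f) := by
  rw [imgSub, Subobject.mk_factors_iff]
  show ∃ k, k ≫ image.ι (t.arrow ≫ f) = g ≫ f
  refine ⟨t.factorThru g h ≫ factorThruImage (t.arrow ≫ f), ?_⟩
  rw [Category.assoc, image.fac, ← Category.assoc, Subobject.factorThru_arrow]

theorem imgSub_le {X Y : D} (f : X ⟶ Y) {t : Subobject X} {r : Subobject Y}
    (h : r.Factors (t.arrow ≫ f)) : imgSub f t ≤ r := image_le h

theorem le_pullback_imgSub [HasPullbacks D] {X Y : D} (f : X ⟶ Y) (t : Subobject X) :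
    t ≤ (Subobject.pullback f).obj (imgSub f t) := by
  apply le_of_factors
  rw [factors_pullback_iff]
  exact imgSub_factors f t (Subobject.factors_self t)

theorem imgSub_bot [HasInitial D] [InitialMonoClass D] {X Y : D} (f : X ⟶ Y) :
    imgSub f (⊥ : Subobject X) = ⊥ := by
  refine le_antisymm (imgSub_le f ?_) bot_le
  let k : (((⊥ : Subobject X)) : D) ⟶ (((⊥ : Subobject Y)) : D) :=
    (Subobject.botCoeIsoInitial).hom ≫ initial.to _
  have hk : k ≫ (⊥ : Subobject Y).arrow = (⊥ : Subobject X).arrow ≫ f := by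
    rw [← cancel_epi (Subobject.botCoeIsoInitial (B := X)).inv]
    exact initial.hom_ext _ _
  have h2 := Subobject.factors_comp_arrow k
  rwa [hk] at h2

theorem sup_eq_mk_image [HasBinaryCoproducts D] {A : D} (s t : Subobject A) :
    s ⊔ t = Subobject.mk (image.ι (coprod.desc s.arrow t.arrow)) := by
  refine le_antisymm (sup_le ?_ ?_) (image_le ?_)
  · refine Subobject.le_mk_of_comm (coprod.inl ≫ factorThruImage _) ?_
    rw [Category.assoc, image.fac, coprod.inl_desc]
  · refine Subobject.le_mk_of_comm (coprod.inr ≫ factorThruImage _) ?_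
    rw [Category.assoc, image.fac, coprod.inr_desc]
  · have fac : coprod.desc (Subobject.ofLE s (s ⊔ t) le_sup_left)
        (Subobject.ofLE t (s ⊔ t) le_sup_right) ≫ (s ⊔ t).arrow
        = coprod.desc s.arrow t.arrow := by
      apply coprod.hom_ext <;> simp [Subobject.ofLE_arrow]
    have h2 := Subobject.factors_comp_arrow (P := s ⊔ t)
      (coprod.desc (Subobject.ofLE s (s ⊔ t) le_sup_left) (Subobject.ofLE t (s ⊔ t) le_sup_right))
    rwa [fac] at h2

end Img

end Generic

section SheafCat

variable {C : Type u} [SmallCategory C] {J : GrothendieckTopology C}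

theorem epi_of_isPullback {P X Y Z : Sheaf J (Type u)} {fst : P ⟶ X} {snd : P ⟶ Y}
    {f : X ⟶ Z} {g : Y ⟶ Z} (sq : IsPullback fst snd f g) [Epi g] : Epi fst := by
  have hg : Sheaf.IsLocallySurjective g := by
    rw [Sheaf.isLocallySurjective_iff_epi]; infer_instance
  have : Sheaf.IsLocallySurjective fst := by
    constructor
    intro U s
    apply J.superset_covering ?_ (Presheaf.imageSieve_mem J g.hom (f.hom.app (op U) s))
    rintro V h ⟨y, hy⟩
    have sqT : IsPullback (fst.hom.app (op V)) (snd.hom.app (op V))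
        (f.hom.app (op V)) (g.hom.app (op V)) := by
      have := sq.map ((sheafToPresheaf J (Type u)) ⋙ (evaluation Cᵒᵖ (Type u)).obj (op V))
      exact this
    have hfx : f.hom.app (op V) (X.val.map h.op s) = g.hom.app (op V) y := by
      have := ConcreteCategory.congr_hom (f.hom.naturality h.op) s
      exact this.trans hy.symm
    obtain ⟨p, hp1, _⟩ := typePb sqT (X.val.map h.op s) y hfx
    exact ⟨p, hp1⟩
  exact Sheaf.epi_of_isLocallySurjective' fst

theorem frobenius_aux {X Y : Sheaf J (Type u)} (f : X ⟶ Y) (s : Subobject Y) (t : Subobject X)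
    (W : Subobject Y) (w : (W : Sheaf J (Type u)) ⟶ image (t.arrow ≫ f))
    (hw : w ≫ image.ι (t.arrow ≫ f) = W.arrow)
    (hWs : W ≤ s) :
    W ≤ imgSub f ((Subobject.pullback f).obj s ⊓ t) := by
  haveI hp : Epi (pullback.fst w (factorThruImage (t.arrow ≫ f))) :=
    epi_of_isPullback (IsPullback.of_hasPullback _ _)
  have key : pullback.fst w (factorThruImage (t.arrow ≫ f)) ≫ W.arrow
      = (pullback.snd w (factorThruImage (t.arrow ≫ f)) ≫ t.arrow) ≫ f := by
    calc pullback.fst w (factorThruImage (t.arrow ≫ f)) ≫ W.arrow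
        = pullback.fst w (factorThruImage (t.arrow ≫ f)) ≫ w ≫ image.ι (t.arrow ≫ f) := by
          rw [hw]
      _ = (pullback.fst w (factorThruImage (t.arrow ≫ f)) ≫ w) ≫ image.ι (t.arrow ≫ f) := by
          simp only [Category.assoc]
      _ = (pullback.snd w (factorThruImage (t.arrow ≫ f)) ≫ factorThruImage (t.arrow ≫ f))
            ≫ image.ι (t.arrow ≫ f) := by rw [pullback.condition]
      _ = pullback.snd w (factorThruImage (t.arrow ≫ f)) ≫ t.arrow ≫ f := by
          simp only [Category.assoc, image.fac]
      _ = _ := by simp only [Category.assoc]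
  refine le_of_epi_factors (pullback.fst w (factorThruImage (t.arrow ≫ f))) ?_
  rw [key]
  apply imgSub_factors
  rw [Subobject.inf_factors]
  refine ⟨?_, Subobject.factors_comp_arrow _⟩
  rw [factors_pullback_iff, ← key]
  exact Subobject.factors_of_le _ hWs (Subobject.factors_comp_arrow _)

theorem frobenius_le {X Y : Sheaf J (Type u)} (f : X ⟶ Y) (s : Subobject Y) (t : Subobject X) :
    s ⊓ imgSub f t ≤ imgSub f ((Subobject.pullback f).obj s ⊓ t) := by
  have hle : s ⊓ imgSub f t ≤ Subobject.mk (image.ι (t.arrow ≫ f)) := inf_le_right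
  exact frobenius_aux f s t _ (Subobject.ofLEMk _ _ hle) (Subobject.ofLEMk_comp hle) inf_le_left

theorem sup_cover_le {X Y : Sheaf J (Type u)} (f : X ⟶ Y) (s t : Subobject Y)
    (u : ((s : Sheaf J (Type u)) ⨿ (t : Sheaf J (Type u))) ⟶ Y)
    (hinl : (coprod.inl : (s : Sheaf J (Type u)) ⟶ _) ≫ u = s.arrow)
    (hinr : (coprod.inr : (t : Sheaf J (Type u)) ⟶ _) ≫ u = t.arrow)
    (W : Subobject X) (w : (W : Sheaf J (Type u)) ⟶ image u)
    (hw : w ≫ image.ι u = W.arrow ≫ f) :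
    W ≤ (Subobject.pullback f).obj s ⊔ (Subobject.pullback f).obj t := by
  haveI hp : Epi (pullback.fst w (factorThruImage u)) :=
    epi_of_isPullback (IsPullback.of_hasPullback _ _)
  obtain ⟨hcol⟩ := pb_coprod_isColimit (pullback.snd w (factorThruImage u))
  have hSkey : (pullback.snd (coprod.inl : (s : Sheaf J (Type u)) ⟶ _) (pullback.snd w (factorThruImage u))
        ≫ pullback.fst w (factorThruImage u) ≫ W.arrow) ≫ f
      = pullback.fst (coprod.inl : (s : Sheaf J (Type u)) ⟶ _) (pullback.snd w (factorThruImage u))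
        ≫ s.arrow := by
    calc (pullback.snd (coprod.inl : (s : Sheaf J (Type u)) ⟶ _) (pullback.snd w (factorThruImage u))
          ≫ pullback.fst w (factorThruImage u) ≫ W.arrow) ≫ f
        = pullback.snd (coprod.inl : (s : Sheaf J (Type u)) ⟶ _) (pullback.snd w (factorThruImage u))
          ≫ pullback.fst w (factorThruImage u) ≫ w ≫ image.ι u := by
          rw [hw]; simp only [Category.assoc]
      _ = pullback.snd (coprod.inl : (s : Sheaf J (Type u)) ⟶ _) (pullback.snd w (factorThruImage u))
          ≫ (pullback.fst w (factorThruImage u) ≫ w) ≫ image.ι u := by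
          simp only [Category.assoc]
      _ = pullback.snd (coprod.inl : (s : Sheaf J (Type u)) ⟶ _) (pullback.snd w (factorThruImage u))
          ≫ (pullback.snd w (factorThruImage u) ≫ factorThruImage u) ≫ image.ι u := by
          rw [pullback.condition]
      _ = (pullback.snd (coprod.inl : (s : Sheaf J (Type u)) ⟶ _) (pullback.snd w (factorThruImage u))
          ≫ pullback.snd w (factorThruImage u)) ≫ u := by
          simp only [Category.assoc, image.fac]
      _ = (pullback.fst (coprod.inl : (s : Sheaf J (Type u)) ⟶ _) (pullback.snd w (factorThruImage u))
          ≫ coprod.inl) ≫ u := by rw [pullback.condition]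
      _ = pullback.fst (coprod.inl : (s : Sheaf J (Type u)) ⟶ _) (pullback.snd w (factorThruImage u))
          ≫ s.arrow := by rw [Category.assoc, hinl]
  have hTkey : (pullback.snd (coprod.inr : (t : Sheaf J (Type u)) ⟶ _) (pullback.snd w (factorThruImage u))
        ≫ pullback.fst w (factorThruImage u) ≫ W.arrow) ≫ f
      = pullback.fst (coprod.inr : (t : Sheaf J (Type u)) ⟶ _) (pullback.snd w (factorThruImage u))
        ≫ t.arrow := by
    calc (pullback.snd (coprod.inr : (t : Sheaf J (Type u)) ⟶ _) (pullback.snd w (factorThruImage u))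
          ≫ pullback.fst w (factorThruImage u) ≫ W.arrow) ≫ f
        = pullback.snd (coprod.inr : (t : Sheaf J (Type u)) ⟶ _) (pullback.snd w (factorThruImage u))
          ≫ pullback.fst w (factorThruImage u) ≫ w ≫ image.ι u := by
          rw [hw]; simp only [Category.assoc]
      _ = pullback.snd (coprod.inr : (t : Sheaf J (Type u)) ⟶ _) (pullback.snd w (factorThruImage u))
          ≫ (pullback.fst w (factorThruImage u) ≫ w) ≫ image.ι u := by
          simp only [Category.assoc]
      _ = pullback.snd (coprod.inr : (t : Sheaf J (Type u)) ⟶ _) (pullback.snd w (factorThruImage u))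
          ≫ (pullback.snd w (factorThruImage u) ≫ factorThruImage u) ≫ image.ι u := by
          rw [pullback.condition]
      _ = (pullback.snd (coprod.inr : (t : Sheaf J (Type u)) ⟶ _) (pullback.snd w (factorThruImage u))
          ≫ pullback.snd w (factorThruImage u)) ≫ u := by
          simp only [Category.assoc, image.fac]
      _ = (pullback.fst (coprod.inr : (t : Sheaf J (Type u)) ⟶ _) (pullback.snd w (factorThruImage u))
          ≫ coprod.inr) ≫ u := by rw [pullback.condition]
      _ = pullback.fst (coprod.inr : (t : Sheaf J (Type u)) ⟶ _) (pullback.snd w (factorThruImage u))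
          ≫ t.arrow := by rw [Category.assoc, hinr]
  have hS : ((Subobject.pullback f).obj s ⊔ (Subobject.pullback f).obj t).Factors
      (pullback.snd (coprod.inl : (s : Sheaf J (Type u)) ⟶ _) (pullback.snd w (factorThruImage u))
        ≫ pullback.fst w (factorThruImage u) ≫ W.arrow) := by
    apply Subobject.sup_factors_of_factors_left
    rw [factors_pullback_iff, hSkey]
    exact Subobject.factors_comp_arrow _
  have hT : ((Subobject.pullback f).obj s ⊔ (Subobject.pullback f).obj t).Factors
      (pullback.snd (coprod.inr : (t : Sheaf J (Type u)) ⟶ _) (pullback.snd w (factorThruImage u))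
        ≫ pullback.fst w (factorThruImage u) ≫ W.arrow) := by
    apply Subobject.sup_factors_of_factors_right
    rw [factors_pullback_iff, hTkey]
    exact Subobject.factors_comp_arrow _
  have hk : hcol.desc (BinaryCofan.mk
        (((Subobject.pullback f).obj s ⊔ (Subobject.pullback f).obj t).factorThru _ hS)
        (((Subobject.pullback f).obj s ⊔ (Subobject.pullback f).obj t).factorThru _ hT))
      ≫ ((Subobject.pullback f).obj s ⊔ (Subobject.pullback f).obj t).arrow
      = pullback.fst w (factorThruImage u) ≫ W.arrow := by
    refine hcol.hom_ext ?_
    rintro ⟨⟨⟩⟩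
    · have hfacL := hcol.fac (BinaryCofan.mk
        (((Subobject.pullback f).obj s ⊔ (Subobject.pullback f).obj t).factorThru _ hS)
        (((Subobject.pullback f).obj s ⊔ (Subobject.pullback f).obj t).factorThru _ hT))
        ⟨WalkingPair.left⟩
      dsimp at hfacL ⊢
      exact ((reassoc_of% hfacL) _).trans (Subobject.factorThru_arrow _ _ _)
    · have hfacR := hcol.fac (BinaryCofan.mk
        (((Subobject.pullback f).obj s ⊔ (Subobject.pullback f).obj t).factorThru _ hS)
        (((Subobject.pullback f).obj s ⊔ (Subobject.pullback f).obj t).factorThru _ hT))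
        ⟨WalkingPair.right⟩
      dsimp at hfacR ⊢
      exact ((reassoc_of% hfacR) _).trans (Subobject.factorThru_arrow _ _ _)
  have hQ : ((Subobject.pullback f).obj s ⊔ (Subobject.pullback f).obj t).Factors
      (pullback.fst w (factorThruImage u) ≫ W.arrow) := by
    have h2 := Subobject.factors_comp_arrow (hcol.desc (BinaryCofan.mk
        (((Subobject.pullback f).obj s ⊔ (Subobject.pullback f).obj t).factorThru _ hS)
        (((Subobject.pullback f).obj s ⊔ (Subobject.pullback f).obj t).factorThru _ hT)))
    rw [← hk]; exact h2
  exact le_of_epi_factors (pullback.fst w (factorThruImage u)) hQ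

theorem pullback_sup_le {X Y : Sheaf J (Type u)} (f : X ⟶ Y) (s t : Subobject Y) :
    (Subobject.pullback f).obj (s ⊔ t)
      ≤ (Subobject.pullback f).obj s ⊔ (Subobject.pullback f).obj t := by
  rw [sup_eq_mk_image s t]
  have hWf : (Subobject.mk (image.ι (coprod.desc s.arrow t.arrow))).Factors
      (((Subobject.pullback f).obj
        (Subobject.mk (image.ι (coprod.desc s.arrow t.arrow)))).arrow ≫ f) :=
    (factors_pullback_iff f _ _).mp (Subobject.factors_self _)
  obtain ⟨w, hw⟩ : ∃ k : ((Subobject.pullback f).obj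
        (Subobject.mk (image.ι (coprod.desc s.arrow t.arrow))) : Sheaf J (Type u))
        ⟶ image (coprod.desc s.arrow t.arrow),
      k ≫ image.ι (coprod.desc s.arrow t.arrow)
        = ((Subobject.pullback f).obj
            (Subobject.mk (image.ι (coprod.desc s.arrow t.arrow)))).arrow ≫ f :=
    (Subobject.mk_factors_iff _ _).mp hWf
  exact sup_cover_le f s t (coprod.desc s.arrow t.arrow)
    (coprod.inl_desc _ _) (coprod.inr_desc _ _) _ w hw

end SheafCat

end BIKAux

/-- for an epimorphism `q : X ⟶ Q`, the quotient `Q` is decidable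
iff the kernel-pair subobject of `q` is complemented in `X ⨯ X`. -/
theorem quotient_decidable_iff_kernelPair_complemented
    {C : Type u} [SmallCategory C] {J : GrothendieckTopology C}
    {X Q : Sheaf J (Type u)} (q : X ⟶ Q) [Epi q] :
    IsDecidableObj Q ↔
      IsComplementedSub
        ((Subobject.pullback (Limits.prod.map q q)).obj (Subobject.mk (diag Q))) := by
  classical
  set f := Limits.prod.map q q with hfdef
  haveI : Epi (Limits.prod.map q (𝟙 Q)) :=
    BIKAux.epi_of_isPullback (BIKAux.isPullback_prod_map_fst q)
  haveI : Epi (Limits.prod.map (𝟙 X) q) :=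
    BIKAux.epi_of_isPullback (BIKAux.isPullback_prod_map_snd q)
  haveI hepi : Epi f := by
    have hcomp : f = Limits.prod.map (𝟙 X) q ≫ Limits.prod.map q (𝟙 Q) := by
      rw [prod.map_map, Category.id_comp, Category.comp_id]
    rw [hcomp]
    exact epi_comp _ _
  set Δ := Subobject.mk (diag Q) with hΔ
  constructor
  · rintro ⟨t, h1, h2⟩
    refine ⟨(Subobject.pullback f).obj t, ?_, ?_⟩
    · rw [← Subobject.inf_pullback, h1, BIKAux.pullback_bot]
    · refine le_antisymm le_top ?_
      calc (⊤ : Subobject (X ⨯ X)) = (Subobject.pullback f).obj ⊤ :=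
            (Subobject.pullback_top f).symm
        _ = (Subobject.pullback f).obj (Δ ⊔ t) := by rw [h2]
        _ ≤ _ := BIKAux.pullback_sup_le f Δ t
  · rintro ⟨t, h1, h2⟩
    refine ⟨BIKAux.imgSub f t, ?_, ?_⟩
    · refine le_antisymm ?_ bot_le
      calc Δ ⊓ BIKAux.imgSub f t
          ≤ BIKAux.imgSub f ((Subobject.pullback f).obj Δ ⊓ t) := BIKAux.frobenius_le f Δ t
        _ = ⊥ := by rw [h1, BIKAux.imgSub_bot]
    · refine le_antisymm le_top ?_
      have hpb : (Subobject.pullback f).obj (Δ ⊔ BIKAux.imgSub f t) = ⊤ := by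
        refine le_antisymm le_top ?_
        rw [← h2]
        refine sup_le ?_ ?_
        · exact BIKAux.pullback_mono f le_sup_left
        · exact le_trans (BIKAux.le_pullback_imgSub f t) (BIKAux.pullback_mono f le_sup_right)
      have hfac : (Δ ⊔ BIKAux.imgSub f t).Factors f := by
        have h3 : ((Subobject.pullback f).obj (Δ ⊔ BIKAux.imgSub f t)).Factors (𝟙 (X ⨯ X)) := by
          rw [hpb]
          exact Subobject.top_factors _
        rw [BIKAux.factors_pullback_iff, Category.id_comp] at h3
        exact h3
      exact ge_of_eq (BIKAux.eq_top_of_factors_epi f hfac)
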